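/- Let Γ = Γ₀ ⊕ Γ₁ be a Z₂-graded algebra over a field F such that: Γ₀ is a unital associative commutative algebra, [Γ₀, Γ₁] = 0, Γ₀ associates with everything, Γ₁² ⊆ Γ₀, odd elements anticommute (xy + yx = 0 for x,y ∈ Γ₁), and the cyclic identity (xy)z + (yz)x + (zx)y = 0 holds for x,y,z ∈ Γ₁. Then Γ is a Jordan superalgebra, i.e., it satisfies the super Jordan identity (xy,z,t) + (−1)^{\bar y\bar z+\bar y\bar t+\bar z\bar t}(xt,z,y) + (−1)^{\bar x(\bar y+\bar z+\bar t)+\bar z\bar t}(yt,z,x) = 0 on homogeneous elements. -/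
import Mathlib


/-- A Z₂-graded algebra Γ = Γ₀ ⊕ Γ₁ with Γ₀ unital associative
commutative, [Γ₀,Γ₁] = 0, vanishing associators with even first entry, Γ₁² ⊆ Γ₀,
anticommuting odd elements and the cyclic identity on odd elements, is a Jordan
superalgebra: the super Jordan identity holds on homogeneous elements. -/
theorem gammaAlgebra_is_jordan_superalgebra
    (F Γ : Type*) [Field F] [NonUnitalNonAssocRing Γ] [Module F Γ]
    (Γ₀ Γ₁ : Submodule F Γ)
    -- Z₂-grading
    (hsum : Γ₀ ⊔ Γ₁ = ⊤) (hdis : Γ₀ ⊓ Γ₁ = ⊥)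
    (h00 : ∀ a ∈ Γ₀, ∀ b ∈ Γ₀, a * b ∈ Γ₀)
    (h01 : ∀ a ∈ Γ₀, ∀ v ∈ Γ₁, a * v ∈ Γ₁)
    (h10 : ∀ v ∈ Γ₁, ∀ a ∈ Γ₀, v * a ∈ Γ₁)
    (h11 : ∀ u ∈ Γ₁, ∀ v ∈ Γ₁, u * v ∈ Γ₀)
    -- Γ₀ is a unital associative commutative algebra
    (e : Γ) (he : e ∈ Γ₀) (hunit : ∀ a ∈ Γ₀, e * a = a ∧ a * e = a)
    (hassoc0 : ∀ a ∈ Γ₀, ∀ b ∈ Γ₀, ∀ c ∈ Γ₀, (a * b) * c = a * (b * c))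
    (hcomm0 : ∀ a ∈ Γ₀, ∀ b ∈ Γ₀, a * b = b * a)
    -- [Γ₀,Γ₁] = 0
    (hcen : ∀ a ∈ Γ₀, ∀ v ∈ Γ₁, a * v = v * a)
    -- (Γ₀, Γ, Γ) = 0 : Γ₀ associates with everything
    (hLassoc : ∀ a ∈ Γ₀, ∀ x y : Γ, (a * x) * y = a * (x * y))
    (hMassoc : ∀ a ∈ Γ₀, ∀ x y : Γ, (x * a) * y = x * (a * y))
    (hRassoc : ∀ a ∈ Γ₀, ∀ x y : Γ, (x * y) * a = x * (y * a))
    -- odd elements anticommute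
    (hanti : ∀ u ∈ Γ₁, ∀ v ∈ Γ₁, u * v + v * u = 0)
    -- cyclic identity on odd elements
    (hcyc : ∀ u ∈ Γ₁, ∀ v ∈ Γ₁, ∀ w ∈ Γ₁, (u * v) * w + (v * w) * u + (w * u) * v = 0) :
    -- super Jordan identity on homogeneous elements
    ∀ (px py pz pt : ZMod 2) (x y z t : Γ),
      x ∈ (if px = 0 then Γ₀ else Γ₁) →
      y ∈ (if py = 0 then Γ₀ else Γ₁) →
      z ∈ (if pz = 0 then Γ₀ else Γ₁) →
      t ∈ (if pt = 0 then Γ₀ else Γ₁) →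
      (((x * y) * z) * t - (x * y) * (z * t))
        + ((-1 : ℤ) ^ (py * pz + py * pt + pz * pt : ZMod 2).val) •
            (((x * t) * z) * y - (x * t) * (z * y))
        + ((-1 : ℤ) ^ (px * (py + pz + pt) + pz * pt : ZMod 2).val) •
            (((y * t) * z) * x - (y * t) * (z * x)) = 0 := by
  -- Every even element is central.
  have hcentral : ∀ a ∈ Γ₀, ∀ x : Γ, a * x = x * a := by
    intro a ha x
    have hx : x ∈ Γ₀ ⊔ Γ₁ := by rw [hsum]; exact Submodule.mem_top
    obtain ⟨u, hu, v, hv, rfl⟩ := Submodule.mem_sup.mp hx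
    rw [mul_add, add_mul, hcomm0 a ha u hu, hcen a ha v hv]
  -- Key symmetry of the associator on odd elements.
  have key : ∀ u ∈ Γ₁, ∀ v ∈ Γ₁, ∀ w ∈ Γ₁,
      (u*v)*w - u*(v*w) = (w*v)*u - w*(v*u) := by
    intro u hu v hv w hw
    have h1 : u*(v*w) = (v*w)*u := by rw [← hcen _ (h11 v hv w hw) u hu]
    have h2 : w*(v*u) = (v*u)*w := by rw [← hcen _ (h11 v hv u hu) w hw]
    have e1 : (u*v)*w + (v*u)*w = 0 := by rw [← add_mul, hanti u hu v hv, zero_mul]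
    have e2 : (w*v)*u + (v*w)*u = 0 := by rw [← add_mul, hanti w hw v hv, zero_mul]
    have g1 : (u*v)*w = -((v*u)*w) := eq_neg_of_add_eq_zero_left e1
    have g2 : (w*v)*u = -((v*w)*u) := eq_neg_of_add_eq_zero_left e2
    rw [h1, h2, g1, g2]; abel
  -- Pulling an even factor out on the right.
  have lemA : ∀ a ∈ Γ₀, ∀ x z y : Γ,
      ((x*a)*z)*y - (x*a)*(z*y) = ((x*z)*y - x*(z*y))*a := by
    intro a ha x z y
    have c1 : (x*a)*z = (x*z)*a := by
      rw [hMassoc a ha, hcentral a ha z, ← hRassoc a ha]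
    have c2 : ((x*z)*a)*y = ((x*z)*y)*a := by
      rw [hMassoc a ha, hcentral a ha y, ← hRassoc a ha]
    have c3 : (x*a)*(z*y) = (x*(z*y))*a := by
      rw [hMassoc a ha, hcentral a ha (z*y), ← hRassoc a ha]
    rw [c1, c2, c3, sub_mul]
  -- Pulling an even factor out on the left.
  have lemB : ∀ a ∈ Γ₀, ∀ y z t : Γ,
      ((a*y)*z)*t - (a*y)*(z*t) = a*((y*z)*t - y*(z*t)) := by
    intro a ha y z t
    rw [hLassoc a ha, hLassoc a ha, hLassoc a ha, mul_sub]
  -- Vanishing associators.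
  have zL : ∀ a ∈ Γ₀, ∀ u w : Γ, (a*u)*w - a*(u*w) = 0 :=
    fun a ha u w => sub_eq_zero.mpr (hLassoc a ha u w)
  have zM : ∀ a ∈ Γ₀, ∀ u w : Γ, (u*a)*w - u*(a*w) = 0 :=
    fun a ha u w => sub_eq_zero.mpr (hMassoc a ha u w)
  have zR : ∀ a ∈ Γ₀, ∀ u w : Γ, (u*w)*a - u*(w*a) = 0 :=
    fun a ha u w => sub_eq_zero.mpr (hRassoc a ha u w)
  have hp : ∀ p : ZMod 2, p = 0 ∨ p = 1 := by decide
  intro px py pz pt x y z t hx hy hz ht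
  rcases hp pz with rfl | rfl
  · -- z even : all three associators vanish
    have hz0 : z ∈ Γ₀ := by simpa using hz
    rw [zM z hz0 (x*y) t, zM z hz0 (x*t) y, zM z hz0 (y*t) x]
    simp
  · have hz1 : z ∈ Γ₁ := by simpa using hz
    rcases hp pt with rfl | rfl
    · -- t even : first term vanishes
      have ht0 : t ∈ Γ₀ := by simpa using ht
      rcases hp px with rfl | rfl <;> rcases hp py with rfl | rfl
      · have hx0 : x ∈ Γ₀ := by simpa using hx
        have hy0 : y ∈ Γ₀ := by simpa using hy
        rw [zR t ht0 (x*y) z, zR y hy0 (x*t) z, zR x hx0 (y*t) z]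
        simp
      · have hx0 : x ∈ Γ₀ := by simpa using hx
        have hy1 : y ∈ Γ₁ := by simpa using hy
        rw [zR t ht0 (x*y) z, zL (x*t) (h00 x hx0 t ht0) z y, zR x hx0 (y*t) z]
        simp
      · have hx1 : x ∈ Γ₁ := by simpa using hx
        have hy0 : y ∈ Γ₀ := by simpa using hy
        rw [zR t ht0 (x*y) z, zR y hy0 (x*t) z, zL (y*t) (h00 y hy0 t ht0) z x]
        simp
      · -- x, y, z odd, t even
        have hx1 : x ∈ Γ₁ := by simpa using hx
        have hy1 : y ∈ Γ₁ := by simpa using hy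
        rw [zR t ht0 (x*y) z, lemA t ht0 x z y, lemA t ht0 y z x,
          key x hx1 z hz1 y hy1]
        norm_num [show ((1:ZMod 2)).val = 1 from rfl, show ((2:ZMod 2)).val = 0 from rfl, show ((3:ZMod 2)).val = 1 from rfl]
    · have ht1 : t ∈ Γ₁ := by simpa using ht
      rcases hp px with rfl | rfl <;> rcases hp py with rfl | rfl
      · -- x, y even
        have hx0 : x ∈ Γ₀ := by simpa using hx
        have hy0 : y ∈ Γ₀ := by simpa using hy
        rw [zL (x*y) (h00 x hx0 y hy0) z t, zR y hy0 (x*t) z, zR x hx0 (y*t) z]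
        simp
      · -- x even, y, z, t odd
        have hx0 : x ∈ Γ₀ := by simpa using hx
        have hy1 : y ∈ Γ₁ := by simpa using hy
        rw [lemB x hx0 y z t, lemB x hx0 t z y, zR x hx0 (y*t) z,
          key y hy1 z hz1 t ht1]
        norm_num [show ((1:ZMod 2)).val = 1 from rfl, show ((2:ZMod 2)).val = 0 from rfl, show ((3:ZMod 2)).val = 1 from rfl]
      · -- y even, x, z, t odd
        have hx1 : x ∈ Γ₁ := by simpa using hx
        have hy0 : y ∈ Γ₀ := by simpa using hy
        rw [lemA y hy0 x z t, zR y hy0 (x*t) z, lemB y hy0 t z x,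
          key x hx1 z hz1 t ht1, hcentral y hy0 ((t*z)*x - t*(z*x))]
        norm_num [show ((1:ZMod 2)).val = 1 from rfl, show ((2:ZMod 2)).val = 0 from rfl, show ((3:ZMod 2)).val = 1 from rfl]
      · -- all odd
        have hx1 : x ∈ Γ₁ := by simpa using hx
        have hy1 : y ∈ Γ₁ := by simpa using hy
        rw [zL (x*y) (h11 x hx1 y hy1) z t, zL (x*t) (h11 x hx1 t ht1) z y,
          zL (y*t) (h11 y hy1 t ht1) z x]
        simp
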